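/- Let (X, Y, A) be jointly distributed with Y, A ∈ {0,1}, let f : X → Z be a feature map, and let H ⊆ 2^Z contain all measurable binary classifiers from Z to {0,1}. If Priv_A(H ∘ f) ≥ 1 − D_JS(D₀^Y, D₁^Y), then for every h ∈ H, Err₀(h ∘ f) + Err₁(h ∘ f) ≥ (1/2) ( d_JS(D₀^Y, D₁^Y) − √(1 − Priv_A(H ∘ f)) )², where D_a^Y is the conditional distribution of Y given A = a. -/

import Mathlib

open MeasureTheory ProbabilityTheory
open scoped ENNReal

/-- Kullback–Leibler divergence (base-2 logarithm) between two mass functions,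
with the usual conventions `0 log 0 = 0`. -/
noncomputable def klFun {α : Type*} (P Q : α → ℝ≥0∞) : ℝ :=
  ∑' a, (P a).toReal * Real.logb 2 ((P a).toReal / (Q a).toReal)

/-- Jensen–Shannon divergence (base-2 logarithm):
`D_JS(P, Q) = (1/2) D_KL(P ‖ M) + (1/2) D_KL(Q ‖ M)` where `M = (P + Q)/2`. -/
noncomputable def jsFun {α : Type*} (P Q : α → ℝ≥0∞) : ℝ :=
  (klFun P (fun a => (P a + Q a) / 2) + klFun Q (fun a => (P a + Q a) / 2)) / 2

/-- `privA μ A g` is the privacy of a binary classifier output `g` with respect to the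
binary sensitive attribute `A`, `1 - |Pr(g = 1 | A = 1) - Pr(g = 1 | A = 0)|`. -/
noncomputable def privA {Ω : Type*} [MeasurableSpace Ω] (μ : Measure Ω)
    (A : Ω → Bool) (g : Ω → Bool) : ℝ :=
  1 - |((ProbabilityTheory.cond μ {ω | A ω = true}) {ω | g ω = true}).toReal -
        ((ProbabilityTheory.cond μ {ω | A ω = false}) {ω | g ω = true}).toReal|

/-- Conditional error `Err_a(g) = E[|Y - g(X)| | A = a]` of a binary classifier. -/
noncomputable def errCond {Ω : Type*} [MeasurableSpace Ω] (μ : Measure Ω)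
    (Y A : Ω → Bool) (g : Ω → Bool) (a : Bool) : ℝ :=
  ∫ ω, |(if Y ω then (1:ℝ) else 0) - (if g ω then (1:ℝ) else 0)|
    ∂(ProbabilityTheory.cond μ {ω' | A ω' = a})

/-- Binary entropy lower bound `H(t) ≥ 2(1-t) ln 2` on `[1/2, 1]`, by concavity. -/
lemma entropy_lower {t : ℝ} (h1 : 1/2 ≤ t) (h2 : t ≤ 1) :
    2 * (1 - t) * Real.log 2 ≤ Real.negMulLog t + Real.negMulLog (1 - t) := by
  have hconc1 : ConcaveOn ℝ (Set.Icc (0:ℝ) 1) Real.negMulLog :=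
    Real.concaveOn_negMulLog.subset (fun x hx => hx.1) (convex_Icc 0 1)
  have hconc2 : ConcaveOn ℝ (Set.Icc (0:ℝ) 1) (fun t => Real.negMulLog (1 - t)) := by
    refine ⟨convex_Icc 0 1, ?_⟩
    intro x hx y hy a b ha hb hab
    have hx' : (1:ℝ) - x ∈ Set.Icc (0:ℝ) 1 := ⟨by linarith [hx.2], by linarith [hx.1]⟩
    have hy' : (1:ℝ) - y ∈ Set.Icc (0:ℝ) 1 := ⟨by linarith [hy.2], by linarith [hy.1]⟩
    have h := hconc1.2 hx' hy' ha hb hab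
    have harg : a • ((1:ℝ) - x) + b • (1 - y) = 1 - (a • x + b • y) := by
      simp only [smul_eq_mul]; nlinarith
    rw [harg] at h
    simpa using h
  have hconc := hconc1.add hconc2
  have m1 : (1/2 : ℝ) ∈ Set.Icc (0:ℝ) 1 := by norm_num
  have m2 : (1 : ℝ) ∈ Set.Icc (0:ℝ) 1 := by norm_num
  have ha : (0:ℝ) ≤ 2 - 2*t := by linarith
  have hb : (0:ℝ) ≤ 2*t - 1 := by linarith
  have hab : (2 - 2*t) + (2*t - 1) = 1 := by ring
  have key := hconc.2 m1 m2 ha hb hab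
  have harg : (2 - 2*t) • ((1:ℝ)/2) + (2*t - 1) • (1:ℝ) = t := by
    simp only [smul_eq_mul]; ring
  rw [harg] at key
  simp only [Pi.add_apply, smul_eq_mul] at key
  have h12 : Real.negMulLog (1/2) = (1/2) * Real.log 2 := by
    rw [Real.negMulLog]
    rw [show ((1:ℝ)/2) = (2:ℝ)⁻¹ by norm_num, Real.log_inv]
    ring
  have e1 : Real.negMulLog ((1:ℝ) - 1/2) = (1/2) * Real.log 2 := by
    norm_num [h12]
  have e2 : Real.negMulLog ((1:ℝ) - 1) = 0 := by norm_num
  rw [h12, e1, e2, Real.negMulLog_one] at key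
  linarith

/-- Per-coordinate Jensen–Shannon bound (ordered case). -/
lemma pair_bound {p q : ℝ} (hp : 0 ≤ p) (hq : 0 ≤ q) (hqp : q ≤ p) :
    p * Real.logb 2 (p / ((p + q)/2)) + q * Real.logb 2 (q / ((p + q)/2)) ≤ p - q := by
  rcases eq_or_lt_of_le hq with hq0 | hq0
  · rcases eq_or_lt_of_le hp with hp0 | hp0
    · simp [← hp0, ← hq0]
    · have : p / ((p + q)/2) = 2 := by
        rw [← hq0]; field_simp; ring
      rw [this, ← hq0]
      simp [Real.logb_self_eq_one]
  · have hp0 : 0 < p := lt_of_lt_of_le hq0 hqp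
    have hpq : 0 < p + q := by linarith
    have h0 : p + q ≠ 0 := ne_of_gt hpq
    have hlog2 : (0:ℝ) < Real.log 2 := Real.log_pos (by norm_num)
    set t := p / (p + q) with ht
    set s := q / (p + q) with hs
    have hts : t + s = 1 := by rw [ht, hs, ← add_div, div_self h0]
    have ht0 : 0 < t := div_pos hp0 hpq
    have hs0 : 0 < s := div_pos hq0 hpq
    have ht1 : 1/2 ≤ t := by
      rw [ht, le_div_iff₀ hpq]; linarith
    have ht2 : t ≤ 1 := by linarith
    have hpt : (p + q) * t = p := by rw [ht]; field_simp
    have hqs : (p + q) * s = q := by rw [hs]; field_simp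
    have harg1 : p / ((p + q)/2) = 2 * t := by
      rw [ht, div_div_eq_mul_div]; ring
    have harg2 : q / ((p + q)/2) = 2 * s := by
      rw [hs, div_div_eq_mul_div]; ring
    have hl1 : Real.logb 2 (2 * t) = 1 + Real.log t / Real.log 2 := by
      rw [Real.logb, Real.log_mul (by norm_num) (ne_of_gt ht0), add_div,
        div_self (ne_of_gt hlog2)]
    have hl2 : Real.logb 2 (2 * s) = 1 + Real.log s / Real.log 2 := by
      rw [Real.logb, Real.log_mul (by norm_num) (ne_of_gt hs0), add_div,
        div_self (ne_of_gt hlog2)]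
    have hent := entropy_lower ht1 ht2
    have hs' : (1:ℝ) - t = s := by linarith
    rw [hs'] at hent
    have hent' : t * Real.log t + s * Real.log s ≤ -(2 * s * Real.log 2) := by
      simp only [Real.negMulLog, neg_mul] at hent; linarith
    have e1 : (p+q)*(t*Real.log t) = (p+q)*t*Real.log t := by ring
    rw [hpt] at e1
    have e2 : (p+q)*(s*Real.log s) = (p+q)*s*Real.log s := by ring
    rw [hqs] at e2
    have e3 : (p+q) * -(2*s*Real.log 2) = (2*((p+q)*s))*Real.log 2 * (-1) := by ring
    rw [hqs] at e3
    have hmain := mul_le_mul_of_nonneg_left hent' (le_of_lt hpq)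
    rw [mul_add, e1, e2, e3] at hmain
    rw [harg1, harg2, hl1, hl2]
    have e : p * (1 + Real.log t / Real.log 2) + q * (1 + Real.log s / Real.log 2)
        = p + q + (p * Real.log t + q * Real.log s)/Real.log 2 := by ring
    rw [e]
    have hd : (p * Real.log t + q * Real.log s)/Real.log 2 ≤ -(2*q) := by
      rw [div_le_iff₀ hlog2]; linarith [hmain]
    linarith [hd]

/-- Per-coordinate Jensen–Shannon bound. -/
lemma pair_bound' {p q : ℝ} (hp : 0 ≤ p) (hq : 0 ≤ q) :
    p * Real.logb 2 (p / ((p + q)/2)) + q * Real.logb 2 (q / ((p + q)/2)) ≤ |p - q| := by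
  rcases le_total q p with h | h
  · rw [abs_of_nonneg (by linarith)]
    exact pair_bound hp hq h
  · rw [abs_of_nonpos (by linarith)]
    have hb := pair_bound hq hp h
    rw [add_comm q p] at hb
    linarith [hb]

/-- Jensen–Shannon divergence is at most the total variation distance (binary case). -/
lemma jsFun_le_tv (P Q : Bool → ℝ≥0∞) (hP : ∀ b, P b ≠ ⊤) (hQ : ∀ b, Q b ≠ ⊤) :
    jsFun P Q ≤ (|(P true).toReal - (Q true).toReal|
      + |(P false).toReal - (Q false).toReal|) / 2 := by
  unfold jsFun klFun
  rw [tsum_bool, tsum_bool]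
  have hm : ∀ b, (((P b + Q b) / 2 : ℝ≥0∞)).toReal = ((P b).toReal + (Q b).toReal) / 2 := by
    intro b
    rw [ENNReal.toReal_div, ENNReal.toReal_add (hP b) (hQ b)]
    norm_num
  rw [hm true, hm false]
  have ht := pair_bound' (ENNReal.toReal_nonneg (a := P true)) (ENNReal.toReal_nonneg (a := Q true))
  have hf := pair_bound' (ENNReal.toReal_nonneg (a := P false)) (ENNReal.toReal_nonneg (a := Q false))
  linarith [ht, hf]

/-- `|P(Y = 1) - P(g = 1)| ≤ E|Y - g|`. -/
lemma abs_diff_le_err {Ω : Type*} [MeasurableSpace Ω] (ν : Measure Ω) [IsProbabilityMeasure ν]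
    (Y g : Ω → Bool) (hY : Measurable Y) (hg : Measurable g) :
    |(ν {ω | Y ω = true}).toReal - (ν {ω | g ω = true}).toReal|
      ≤ ∫ ω, |(if Y ω then (1:ℝ) else 0) - (if g ω then (1:ℝ) else 0)| ∂ν := by
  set S : Set Ω := {ω | Y ω = true} with hSdef
  set T : Set Ω := {ω | g ω = true} with hTdef
  have hS : MeasurableSet S := hY (measurableSet_singleton true)
  have hT : MeasurableSet T := hg (measurableSet_singleton true)
  have hiS : Integrable (S.indicator fun _ => (1:ℝ)) ν :=
    (integrable_const (1:ℝ)).indicator hS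
  have hiT : Integrable (T.indicator fun _ => (1:ℝ)) ν :=
    (integrable_const (1:ℝ)).indicator hT
  have hrw : ∀ ω, |(if Y ω then (1:ℝ) else 0) - (if g ω then (1:ℝ) else 0)|
      = |S.indicator (fun _ => (1:ℝ)) ω - T.indicator (fun _ => (1:ℝ)) ω| := by
    intro ω
    simp [Set.indicator_apply, hSdef, hTdef, Set.mem_setOf_eq]
  have hIS : ∫ ω, S.indicator (fun _ => (1:ℝ)) ω ∂ν = (ν S).toReal := by
    exact (by simpa using integral_indicator_const (1:ℝ) hS : _ = ν.real S)
  have hIT : ∫ ω, T.indicator (fun _ => (1:ℝ)) ω ∂ν = (ν T).toReal := by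
    exact (by simpa using integral_indicator_const (1:ℝ) hT : _ = ν.real T)
  calc |(ν S).toReal - (ν T).toReal|
      = |∫ ω, (S.indicator (fun _ => (1:ℝ)) ω - T.indicator (fun _ => (1:ℝ)) ω) ∂ν| := by
        rw [integral_sub hiS hiT, hIS, hIT]
    _ ≤ ∫ ω, |S.indicator (fun _ => (1:ℝ)) ω - T.indicator (fun _ => (1:ℝ)) ω| ∂ν := by
        simpa [Real.norm_eq_abs] using
          norm_integral_le_integral_norm (μ := ν)
            (fun ω => S.indicator (fun _ => (1:ℝ)) ω - T.indicator (fun _ => (1:ℝ)) ω)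
    _ = ∫ ω, |(if Y ω then (1:ℝ) else 0) - (if g ω then (1:ℝ) else 0)| ∂ν := by
        simp only [hrw]

/-- privacy–error trade-off: when `H` consists of all (measurable)
binary classifiers over `𝒵`, if `Priv_A(H∘f) ≥ 1 - D_JS(D₀^Y, D₁^Y)`, then for
every `h ∈ H`,
`Err₀(h∘f) + Err₁(h∘f) ≥ (1/2)(d_JS(D₀^Y, D₁^Y) - √(1 - Priv_A(H∘f)))²`. -/
theorem privacy_error_tradeoff
    {Ω 𝒳 𝒵 : Type*} [MeasurableSpace Ω] [MeasurableSpace 𝒵]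
    [MeasurableSingletonClass 𝒵] [Countable 𝒵]
    (μ : Measure Ω) [IsProbabilityMeasure μ]
    (X : Ω → 𝒳) (Y A : Ω → Bool) (f : 𝒳 → 𝒵)
    (hY : Measurable Y) (hA : Measurable A) (hfX : Measurable (fun ω => f (X ω)))
    (hA0 : μ {ω | A ω = false} ≠ 0) (hA1 : μ {ω | A ω = true} ≠ 0)
    (hpriv : 1 - jsFun
          (fun b => (ProbabilityTheory.cond μ {ω | A ω = false}) {ω | Y ω = b})
          (fun b => (ProbabilityTheory.cond μ {ω | A ω = true}) {ω | Y ω = b})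
        ≤ ⨅ g : 𝒵 → Bool, privA μ A (fun ω => g (f (X ω)))) :
    ∀ h : 𝒵 → Bool,
      (1/2) * (Real.sqrt (jsFun
            (fun b => (ProbabilityTheory.cond μ {ω | A ω = false}) {ω | Y ω = b})
            (fun b => (ProbabilityTheory.cond μ {ω | A ω = true}) {ω | Y ω = b}))
          - Real.sqrt (1 - ⨅ g : 𝒵 → Bool, privA μ A (fun ω => g (f (X ω)))))^2
        ≤ errCond μ Y A (fun ω => h (f (X ω))) false
          + errCond μ Y A (fun ω => h (f (X ω))) true := by
  intro h
  -- conditional measures are probability measures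
  haveI i0 : IsProbabilityMeasure (ProbabilityTheory.cond μ {ω | A ω = false}) :=
    ProbabilityTheory.cond_isProbabilityMeasure hA0
  haveI i1 : IsProbabilityMeasure (ProbabilityTheory.cond μ {ω | A ω = true}) :=
    ProbabilityTheory.cond_isProbabilityMeasure hA1
  set ν0 := ProbabilityTheory.cond μ {ω | A ω = false} with hν0
  set ν1 := ProbabilityTheory.cond μ {ω | A ω = true} with hν1
  set g : Ω → Bool := fun ω => h (f (X ω)) with hg
  have hgm : Measurable g := (measurable_of_countable h).comp hfX
  set J := jsFun (fun b => ν0 {ω | Y ω = b}) (fun b => ν1 {ω | Y ω = b}) with hJ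
  set PR := ⨅ g' : 𝒵 → Bool, privA μ A (fun ω => g' (f (X ω))) with hPR
  -- basic facts about probabilities
  have prob_le_one' : ∀ (ν : Measure Ω) [IsProbabilityMeasure ν] (s : Set Ω),
      (ν s).toReal ≤ 1 := by
    intro ν _ s
    have h1 : (ν s).toReal ≤ ((1 : ℝ≥0∞)).toReal :=
      ENNReal.toReal_mono (by simp) prob_le_one
    simpa using h1
  -- each privA value is within [0, 1]
  have hprivA_mem : ∀ g' : 𝒵 → Bool, 0 ≤ privA μ A (fun ω => g' (f (X ω)))
      ∧ privA μ A (fun ω => g' (f (X ω))) ≤ 1 := by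
    intro g'
    constructor
    · unfold privA
      have h1 := prob_le_one' (ProbabilityTheory.cond μ {ω | A ω = true}) {ω | g' (f (X ω)) = true}
      have h2 := prob_le_one' (ProbabilityTheory.cond μ {ω | A ω = false}) {ω | g' (f (X ω)) = true}
      have h3 : (0:ℝ) ≤ ((ProbabilityTheory.cond μ {ω | A ω = true}) {ω | g' (f (X ω)) = true}).toReal :=
        ENNReal.toReal_nonneg
      have h4 : (0:ℝ) ≤ ((ProbabilityTheory.cond μ {ω | A ω = false}) {ω | g' (f (X ω)) = true}).toReal :=
        ENNReal.toReal_nonneg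
      rw [sub_nonneg, abs_le]
      constructor <;> linarith
    · unfold privA
      have := abs_nonneg (((ProbabilityTheory.cond μ {ω | A ω = true}) {ω | g' (f (X ω)) = true}).toReal -
        ((ProbabilityTheory.cond μ {ω | A ω = false}) {ω | g' (f (X ω)) = true}).toReal)
      linarith
  have hbdd : BddBelow (Set.range fun g' : 𝒵 → Bool => privA μ A (fun ω => g' (f (X ω)))) := by
    refine ⟨0, ?_⟩
    rintro x ⟨g', rfl⟩
    exact (hprivA_mem g').1
  -- PR ≤ privA of h ∘ f, and PR ≤ 1
  have hPRle : PR ≤ privA μ A g := ciInf_le hbdd h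
  have hPRle1 : PR ≤ 1 := le_trans hPRle (hprivA_mem h).2
  -- total variation style quantities
  set q0 := (ν0 {ω | Y ω = true}).toReal with hq0
  set q1 := (ν1 {ω | Y ω = true}).toReal with hq1
  set p0 := (ν0 {ω | g ω = true}).toReal with hp0
  set p1 := (ν1 {ω | g ω = true}).toReal with hp1
  -- J ≤ |q0 - q1|
  have hJle : J ≤ |q0 - q1| := by
    have := jsFun_le_tv (fun b => ν0 {ω | Y ω = b}) (fun b => ν1 {ω | Y ω = b})
      (fun b => measure_ne_top _ _) (fun b => measure_ne_top _ _)
    have habs : |(ν0 {ω | Y ω = false}).toReal - (ν1 {ω | Y ω = false}).toReal| = |q0 - q1| := by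
      have hSm : MeasurableSet {ω | Y ω = true} := hY (measurableSet_singleton true)
      have e0 : (ν0 {ω | Y ω = false}).toReal = 1 - q0 := by
        have : {ω | Y ω = false} = {ω | Y ω = true}ᶜ := by
          ext ω; simp [Set.mem_setOf_eq, Set.mem_compl_iff]
        rw [this, measure_compl hSm (measure_ne_top _ _), measure_univ,
          ENNReal.toReal_sub_of_le prob_le_one (by simp)]
        simp [hq0]
      have e1 : (ν1 {ω | Y ω = false}).toReal = 1 - q1 := by
        have : {ω | Y ω = false} = {ω | Y ω = true}ᶜ := by
          ext ω; simp [Set.mem_setOf_eq, Set.mem_compl_iff]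
        rw [this, measure_compl hSm (measure_ne_top _ _), measure_univ,
          ENNReal.toReal_sub_of_le prob_le_one (by simp)]
        simp [hq1]
      rw [e0, e1]
      rw [show (1 - q0) - (1 - q1) = -(q0 - q1) by ring, abs_neg]
    rw [habs] at this
    calc J ≤ (|q0 - q1| + |q0 - q1|) / 2 := this
      _ = |q0 - q1| := by ring
  -- errors
  set E0 := errCond μ Y A g false with hE0
  set E1 := errCond μ Y A g true with hE1
  have hE0d : |q0 - p0| ≤ E0 := abs_diff_le_err ν0 Y g hY hgm
  have hE1d : |q1 - p1| ≤ E1 := abs_diff_le_err ν1 Y g hY hgm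
  have hE0nn : 0 ≤ E0 := integral_nonneg fun ω => abs_nonneg _
  have hE1nn : 0 ≤ E1 := integral_nonneg fun ω => abs_nonneg _
  -- privacy of g in terms of p0, p1
  have hprivg : privA μ A g = 1 - |p1 - p0| := rfl
  -- triangle inequality chain
  have htri : |q0 - q1| ≤ |q0 - p0| + |p1 - p0| + |q1 - p1| := by
    have h1 : |q0 - q1| ≤ |q0 - p0| + |p0 - q1| := abs_sub_le q0 p0 q1
    have h2 : |p0 - q1| ≤ |p0 - p1| + |p1 - q1| := abs_sub_le p0 p1 q1
    have h3 : |p0 - p1| = |p1 - p0| := abs_sub_comm p0 p1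
    have h4 : |p1 - q1| = |q1 - p1| := abs_sub_comm p1 q1
    linarith
  -- key chain: J - 1 + PR ≤ E0 + E1
  have hkey : J - 1 + PR ≤ E0 + E1 := by
    have : PR ≤ 1 - |p1 - p0| := by rw [← hprivg]; exact hPRle
    linarith [hJle, htri, hE0d, hE1d]
  -- square root manipulations
  have hJnn : 1 - PR ≤ J := by linarith [hpriv]
  have h1PRnn : 0 ≤ 1 - PR := by linarith
  have hJ0 : 0 ≤ J := le_trans h1PRnn hJnn
  set a := Real.sqrt J with ha
  set b := Real.sqrt (1 - PR) with hb
  have ha2 : a^2 = J := Real.sq_sqrt hJ0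
  have hb2 : b^2 = 1 - PR := Real.sq_sqrt h1PRnn
  have hba : b ≤ a := Real.sqrt_le_sqrt hJnn
  have hbnn : 0 ≤ b := Real.sqrt_nonneg _
  nlinarith [hkey, ha2, hb2, hba, hbnn, hE0nn, hE1nn, sq_nonneg (a - b)]
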